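/- arXiv:2403.00532 — 4 statements merged into one kernel-verified Lean document; each statement's English description precedes it below -/
import Mathlib

section
/- For the two-bang evolution operator Û = exp(-i(Δσz - uσx)t₂/2)·exp(-i(Δσz + uσx)t₁/2), the transition probability |⟨↓|Û|↑⟩|² equals (u²/Ω⁴)[4Δ² sin²(Ωt₁/2) sin²(Ωt₂/2) + Ω² sin²(Ω(t₁-t₂)/2)], where Ω = √(Δ² + u²). -/
open Matrix Complex
open scoped Nat

noncomputable def σx : Matrix (Fin 2) (Fin 2) ℂ := !![0, 1; 1, 0]
noncomputable def σz : Matrix (Fin 2) (Fin 2) ℂ := !![1, 0; 0, -1]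

noncomputable def up : Fin 2 → ℂ := ![1, 0]
noncomputable def down : Fin 2 → ℂ := ![0, 1]

theorem exp_smul_of_sq (A : Matrix (Fin 2) (Fin 2) ℂ) (ω c : ℂ) (hω : ω ≠ 0)
    (h : A * A = ω ^ 2 • 1) :
    NormedSpace.exp (c • A)
      = Complex.cosh (c * ω) • (1 : Matrix (Fin 2) (Fin 2) ℂ)
        + (Complex.sinh (c * ω) / ω) • A := by
  rw [NormedSpace.exp_eq_tsum (𝕂 := ℂ)]
  refine HasSum.tsum_eq ?_
  set μ := c * ω with hμ
  have hx2 : (c • A) * (c • A) = μ ^ 2 • (1 : Matrix (Fin 2) (Fin 2) ℂ) := by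
    rw [Matrix.smul_mul, Matrix.mul_smul, h, smul_smul, smul_smul]
    congr 1
    ring
  have heven : ∀ k : ℕ, (c • A) ^ (2 * k) = μ ^ (2 * k) • (1 : Matrix (Fin 2) (Fin 2) ℂ) := by
    intro k
    rw [pow_mul, pow_two, hx2, smul_pow, one_pow, ← pow_mul]
  have hodd : ∀ k : ℕ, (c • A) ^ (2 * k + 1) = (μ ^ (2 * k + 1) / ω) • A := by
    intro k
    rw [pow_succ, heven k, Matrix.smul_mul, one_mul, smul_smul]
    congr 1
    rw [hμ]
    field_simp
    ring
  have hc : HasSum (fun k : ℕ => (((2 * k)! : ℂ)⁻¹) • (c • A) ^ (2 * k))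
      (Complex.cosh μ • (1 : Matrix (Fin 2) (Fin 2) ℂ)) := by
    have := (Complex.hasSum_cosh μ).smul_const (1 : Matrix (Fin 2) (Fin 2) ℂ)
    convert this using 2 with k
    rw [heven k, smul_smul, div_eq_inv_mul]
  have hs : HasSum (fun k : ℕ => (((2 * k + 1)! : ℂ)⁻¹) • (c • A) ^ (2 * k + 1))
      ((Complex.sinh μ / ω) • A) := by
    have := ((Complex.hasSum_sinh μ).div_const ω).smul_const A
    convert this using 2 with k
    rw [hodd k, smul_smul]
    congr 1
    ring
  exact HasSum.even_add_odd hc hs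


/-- For Û = exp(-i(Δσz - uσx)t₂/2)·exp(-i(Δσz + uσx)t₁/2), the transition
probability |⟨↓|Û|↑⟩|² equals
(u²/Ω⁴)[4Δ² sin²(Ωt₁/2) sin²(Ωt₂/2) + Ω² sin²(Ω(t₁-t₂)/2)], Ω = √(Δ² + u²). -/
theorem two_bang_transition_probability
    (Δ u : ℝ) (t₁ t₂ : ℝ) (ht₁ : 0 ≤ t₁) (ht₂ : 0 ≤ t₂)
    (Ω : ℝ) (hΩ : Ω = Real.sqrt (Δ ^ 2 + u ^ 2)) (hΩpos : 0 < Ω) :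
    ‖(star down ⬝ᵥ
      ((NormedSpace.exp ((-Complex.I * t₂ / 2) • ((Δ : ℂ) • σz - (u : ℂ) • σx)) *
        NormedSpace.exp ((-Complex.I * t₁ / 2) • ((Δ : ℂ) • σz + (u : ℂ) • σx)))
        *ᵥ up))‖ ^ 2
      = u ^ 2 / Ω ^ 4 *
          (4 * Δ ^ 2 * Real.sin (Ω * t₁ / 2) ^ 2 * Real.sin (Ω * t₂ / 2) ^ 2
            + Ω ^ 2 * Real.sin (Ω * (t₁ - t₂) / 2) ^ 2) := by
  have hΩR : (Ω : ℝ) ^ 2 = Δ ^ 2 + u ^ 2 := by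
    rw [hΩ]; exact Real.sq_sqrt (by positivity)
  have hΩC : (Ω : ℂ) ^ 2 = (Δ : ℂ) ^ 2 + (u : ℂ) ^ 2 := by
    exact_mod_cast congrArg (Complex.ofReal ·) hΩR
  have hωne : (Ω : ℂ) ≠ 0 := by exact_mod_cast hΩpos.ne'
  have hA : ((Δ : ℂ) • σz + (u : ℂ) • σx) * ((Δ : ℂ) • σz + (u : ℂ) • σx)
      = ((Ω : ℂ)) ^ 2 • 1 := by
    ext i j
    fin_cases i <;> fin_cases j <;>
      simp [σx, σz, Matrix.mul_apply, Fin.sum_univ_two, Matrix.one_apply, hΩC] <;> ring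
  have hB : ((Δ : ℂ) • σz - (u : ℂ) • σx) * ((Δ : ℂ) • σz - (u : ℂ) • σx)
      = ((Ω : ℂ)) ^ 2 • 1 := by
    ext i j
    fin_cases i <;> fin_cases j <;>
      simp [σx, σz, Matrix.mul_apply, Fin.sum_univ_two, Matrix.one_apply, hΩC] <;> ring
  have key : ∀ t : ℝ, Complex.cosh (-Complex.I * t / 2 * Ω)
        = (Real.cos (Ω * t / 2) : ℂ) ∧
      Complex.sinh (-Complex.I * t / 2 * Ω)
        = -((Real.sin (Ω * t / 2) : ℂ)) * Complex.I := by
    intro t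
    have h1 : -Complex.I * t / 2 * Ω = -(((Ω * t / 2 : ℝ) : ℂ) * Complex.I) := by
      push_cast; ring
    rw [h1, Complex.cosh_neg, Complex.sinh_neg, Complex.cosh_mul_I, Complex.sinh_mul_I,
      Complex.ofReal_cos, Complex.ofReal_sin]
    exact ⟨rfl, by ring⟩
  rw [exp_smul_of_sq _ _ _ hωne hB, exp_smul_of_sq _ _ _ hωne hA,
    (key t₁).1, (key t₁).2, (key t₂).1, (key t₂).2]
  set c₁ := Real.cos (Ω * t₁ / 2)
  set s₁ := Real.sin (Ω * t₁ / 2)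
  set c₂ := Real.cos (Ω * t₂ / 2)
  set s₂ := Real.sin (Ω * t₂ / 2)
  have harg : Ω * (t₁ - t₂) / 2 = Ω * t₁ / 2 - Ω * t₂ / 2 := by ring
  rw [harg, Real.sin_sub, Complex.sq_norm, Complex.normSq_apply]
  simp only [σx, σz, up, down, Matrix.mul_apply, Matrix.add_apply, Matrix.smul_apply,
    Matrix.one_apply, Fin.sum_univ_two, dotProduct, mulVec, Pi.star_apply,
    Matrix.cons_val', Matrix.cons_val_zero, Matrix.cons_val_one, Matrix.head_cons,
    Matrix.empty_val', Matrix.cons_val_fin_one, Matrix.head_fin_const, smul_eq_mul]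
  simp [Complex.add_re, Complex.mul_re, Complex.mul_im, Complex.add_im, Complex.div_re,
    Complex.div_im, Complex.normSq_apply]
  field_simp
  ring
end

section
/- With |Δ| < u₀ and Ω = √(Δ² + u₀²), the choice t₁ = (π - arccos(Δ²/u₀²))/Ω and t₂ = (π + arccos(Δ²/u₀²))/Ω gives |⟨↓|exp(-i(Δσz - u₀σx)t₂/2)·exp(-i(Δσz + u₀σx)t₁/2)|↑⟩|² = 1, with total time t₁ + t₂ = 2π/Ω. -/
open Matrix Complex

lemma exp_M (a b : ℝ) (hb : b ≠ 0) (h : a ^ 2 + b ^ 2 = 1) (z : ℂ) :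
    NormedSpace.exp (z • !![(a : ℂ), b; b, -a]) =
      Complex.cosh z • (1 : Matrix (Fin 2) (Fin 2) ℂ) +
        Complex.sinh z • !![(a : ℂ), b; b, -a] := by
  have ha : (1 : ℝ) + a ≠ 0 := by
    intro h0
    apply hb
    nlinarith [sq_nonneg b]
  have hC : (a : ℂ) ^ 2 + (b : ℂ) ^ 2 = 1 := by exact_mod_cast congrArg (Complex.ofReal) h
  have haC : (1 : ℂ) + a ≠ 0 := by
    intro h0
    apply ha
    exact_mod_cast congrArg Complex.re h0
  have hdet : IsUnit (!![(1 + a : ℂ), -b; b, 1 + a] : Matrix (Fin 2) (Fin 2) ℂ).det := by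
    rw [Matrix.det_fin_two_of]
    simp only [isUnit_iff_ne_zero]
    intro h0
    apply haC
    have h2 : ((1:ℂ)+a) * (2 : ℂ) = 0 := by linear_combination h0 - hC
    rcases mul_eq_zero.mp h2 with h3 | h3
    · exact h3
    · norm_num at h3
  have hPU : IsUnit (!![(1 + a : ℂ), -b; b, 1 + a] : Matrix (Fin 2) (Fin 2) ℂ) :=
    (Matrix.isUnit_iff_isUnit_det _).mpr hdet
  have hone : (1 : Matrix (Fin 2) (Fin 2) ℂ) = !![1, 0; 0, 1] := by
    ext i j; fin_cases i <;> fin_cases j <;> simp [Matrix.one_apply]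
  have h1 : z • !![(a : ℂ), b; b, -a] * !![(1 + a : ℂ), -b; b, 1 + a]
      = !![(1 + a : ℂ), -b; b, 1 + a] * Matrix.diagonal ![z, -z] := by
    ext i j
    fin_cases i <;> fin_cases j <;>
      simp [Matrix.mul_apply, Fin.sum_univ_two, Matrix.diagonal] <;>
      [(linear_combination z * hC); ring; ring; (linear_combination (-z) * hC)]
  have key : z • !![(a : ℂ), b; b, -a]
      = !![(1 + a : ℂ), -b; b, 1 + a] * Matrix.diagonal ![z, -z]
        * !![(1 + a : ℂ), -b; b, 1 + a]⁻¹ := by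
    rw [← h1, Matrix.mul_nonsing_inv_cancel_right _ _ hdet]
  rw [key, Matrix.exp_conj _ _ hPU, Matrix.exp_diagonal]
  have hexp : NormedSpace.exp ![z, -z]
      = ![Complex.cosh z + Complex.sinh z, Complex.cosh z - Complex.sinh z] := by
    rw [Pi.exp_def]
    ext i
    fin_cases i <;>
      simp [← Complex.exp_eq_exp_ℂ, Complex.cosh_add_sinh, Complex.cosh_sub_sinh]
  rw [hexp]
  have h2 : (Complex.cosh z • (1 : Matrix (Fin 2) (Fin 2) ℂ)
        + Complex.sinh z • !![(a : ℂ), b; b, -a]) * !![(1 + a : ℂ), -b; b, 1 + a]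
      = !![(1 + a : ℂ), -b; b, 1 + a]
        * Matrix.diagonal ![Complex.cosh z + Complex.sinh z,
            Complex.cosh z - Complex.sinh z] := by
    rw [hone]
    ext i j
    fin_cases i <;> fin_cases j <;>
      simp [Matrix.mul_apply, Fin.sum_univ_two, Matrix.diagonal, Matrix.add_apply,
        Matrix.smul_apply] <;>
      [(linear_combination Complex.sinh z * hC + (1 + (a:ℂ)) * Complex.cosh_add_sinh z);
       (linear_combination (-(b:ℂ)) * Complex.cosh_sub_sinh z);
       (linear_combination (b:ℂ) * Complex.cosh_add_sinh z);
       (linear_combination (-Complex.sinh z) * hC + (1 + (a:ℂ)) * Complex.cosh_sub_sinh z)]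
  rw [← h2, Matrix.mul_nonsing_inv_cancel_right _ _ hdet]

set_option maxHeartbeats 1000000 in
/-- With |Δ| < u₀ and Ω = √(Δ² + u₀²), the choice t₁ = (π - arccos(Δ²/u₀²))/Ω,
t₂ = (π + arccos(Δ²/u₀²))/Ω gives a perfect transfer
|⟨↓|exp(-i(Δσz - u₀σx)t₂/2)·exp(-i(Δσz + u₀σx)t₁/2)|↑⟩|² = 1, with total time
t₁ + t₂ = 2π/Ω. -/
theorem two_bang_optimal_transfer
    (Δ u₀ : ℝ) (hΔ : |Δ| < u₀)
    (Ω : ℝ) (hΩ : Ω = Real.sqrt (Δ ^ 2 + u₀ ^ 2))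
    (t₁ t₂ : ℝ)
    (ht₁ : t₁ = (Real.pi - Real.arccos (Δ ^ 2 / u₀ ^ 2)) / Ω)
    (ht₂ : t₂ = (Real.pi + Real.arccos (Δ ^ 2 / u₀ ^ 2)) / Ω) :
    ‖(star down ⬝ᵥ
      ((NormedSpace.exp ((-Complex.I * t₂ / 2) • ((Δ : ℂ) • σz - (u₀ : ℂ) • σx)) *
        NormedSpace.exp ((-Complex.I * t₁ / 2) • ((Δ : ℂ) • σz + (u₀ : ℂ) • σx)))
        *ᵥ up))‖ ^ 2 = 1
    ∧ t₁ + t₂ = 2 * Real.pi / Ω := by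
  have hu : 0 < u₀ := (abs_nonneg Δ).trans_lt hΔ
  have hΩpos : 0 < Ω := by
    rw [hΩ]; exact Real.sqrt_pos.mpr (by positivity)
  have hΩne : Ω ≠ 0 := ne_of_gt hΩpos
  have hΩsq : Ω ^ 2 = Δ ^ 2 + u₀ ^ 2 := by
    rw [hΩ]; exact Real.sq_sqrt (by positivity)
  have hΩC : (Ω : ℂ) ≠ 0 := by exact_mod_cast hΩne
  constructor
  · -- main amplitude computation
    set a : ℝ := Δ / Ω with ha
    set b : ℝ := u₀ / Ω with hb
    have hbne : b ≠ 0 := div_ne_zero (ne_of_gt hu) hΩne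
    have hab : a ^ 2 + b ^ 2 = 1 := by
      rw [ha, hb, div_pow, div_pow, ← add_div, ← hΩsq, div_self (by positivity)]
    set θ : ℝ := Ω * t₁ / 2 with hθ
    set φ : ℝ := Ω * t₂ / 2 with hφ
    -- rewrite the first exponential
    have harg1 : (-Complex.I * t₁ / 2) • ((Δ : ℂ) • σz + (u₀ : ℂ) • σx)
        = (-(θ : ℂ) * I) • !![(a : ℂ), b; b, -a] := by
      rw [σz, σx]
      ext i j
      fin_cases i <;> fin_cases j <;>
        · simp [Matrix.smul_apply, Matrix.add_apply, ha, hb, hθ]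
          push_cast
          field_simp [hΩC]
          try ring
    have harg2 : (-Complex.I * t₂ / 2) • ((Δ : ℂ) • σz - (u₀ : ℂ) • σx)
        = (-(φ : ℂ) * I) • !![(a : ℂ), (-b : ℝ); (-b : ℝ), -a] := by
      rw [σz, σx]
      ext i j
      fin_cases i <;> fin_cases j <;>
        · simp [Matrix.smul_apply, Matrix.sub_apply, ha, hb, hφ]
          push_cast
          field_simp [hΩC]
          try ring
    have hch : ∀ t : ℝ, Complex.cosh (-(t : ℂ) * I) = (Real.cos t : ℂ) := by
      intro t
      rw [show (-(t:ℂ) * I) = ((-t : ℝ) : ℂ) * I by push_cast; ring, Complex.cosh_mul_I,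
        ← Complex.ofReal_cos, Real.cos_neg]
    have hsh : ∀ t : ℝ, Complex.sinh (-(t : ℂ) * I) = -(Real.sin t : ℂ) * I := by
      intro t
      rw [show (-(t:ℂ) * I) = ((-t : ℝ) : ℂ) * I by push_cast; ring, Complex.sinh_mul_I,
        ← Complex.ofReal_sin, Real.sin_neg, Complex.ofReal_neg]
    have hE1 : NormedSpace.exp ((-Complex.I * t₁ / 2) • ((Δ : ℂ) • σz + (u₀ : ℂ) • σx))
        = (Real.cos θ : ℂ) • (1 : Matrix (Fin 2) (Fin 2) ℂ)
          + (-(Real.sin θ : ℂ) * I) • !![(a : ℂ), b; b, -a] := by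
      rw [harg1, exp_M a b hbne hab, hch, hsh]
    have hE2 : NormedSpace.exp ((-Complex.I * t₂ / 2) • ((Δ : ℂ) • σz - (u₀ : ℂ) • σx))
        = (Real.cos φ : ℂ) • (1 : Matrix (Fin 2) (Fin 2) ℂ)
          + (-(Real.sin φ : ℂ) * I) • !![(a : ℂ), (-b : ℝ); (-b : ℝ), -a] := by
      rw [harg2, exp_M a (-b) (neg_ne_zero.mpr hbne) (by rw [neg_sq]; exact hab), hch,
        hsh]
    rw [hE1, hE2]
    have hamp : star down ⬝ᵥ
        ((((Real.cos φ : ℂ) • (1 : Matrix (Fin 2) (Fin 2) ℂ)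
          + (-(Real.sin φ : ℂ) * I) • !![(a : ℂ), (-b : ℝ); (-b : ℝ), -a]) *
         ((Real.cos θ : ℂ) • (1 : Matrix (Fin 2) (Fin 2) ℂ)
          + (-(Real.sin θ : ℂ) * I) • !![(a : ℂ), b; b, -a]))
        *ᵥ up)
        = ((2 * a * b * Real.sin θ * Real.sin φ : ℝ) : ℂ)
          + ((b * (Real.sin φ * Real.cos θ - Real.cos φ * Real.sin θ) : ℝ) : ℂ) * I := by
      simp [down, up, dotProduct, Matrix.mulVec, Fin.sum_univ_two, Matrix.mul_apply,
        Matrix.add_apply, Matrix.smul_apply, Matrix.one_apply]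
      apply Complex.ext <;> simp <;> ring
    rw [hamp, Complex.sq_norm, Complex.normSq_add_mul_I]
    -- now pure real trigonometry
    set α : ℝ := Real.arccos (Δ ^ 2 / u₀ ^ 2) with hα
    have hθval : θ = Real.pi / 2 - α / 2 := by
      rw [hθ, ht₁]; field_simp
    have hφval : φ = Real.pi / 2 + α / 2 := by
      rw [hφ, ht₂]; field_simp
    have hc01 : (0:ℝ) ≤ Δ ^ 2 / u₀ ^ 2 := by positivity
    have hc11 : Δ ^ 2 / u₀ ^ 2 ≤ 1 := by
      rw [div_le_one (by positivity)]
      nlinarith [abs_nonneg Δ, _root_.sq_abs Δ]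
    have hcos : Real.cos α = Δ ^ 2 / u₀ ^ 2 := Real.cos_arccos (by linarith) hc11
    have hsinθ : Real.sin θ = Real.cos (α / 2) := by
      rw [hθval, Real.sin_pi_div_two_sub]
    have hsinφ : Real.sin φ = Real.cos (α / 2) := by
      rw [hφval, Real.sin_add, Real.sin_pi_div_two, Real.cos_pi_div_two]; ring
    have hcosθ : Real.cos θ = Real.sin (α / 2) := by
      rw [hθval, Real.cos_pi_div_two_sub]
    have hcosφ : Real.cos φ = -Real.sin (α / 2) := by
      rw [hφval, Real.cos_add, Real.sin_pi_div_two, Real.cos_pi_div_two]; ring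
    have hhalfc : Real.cos (α / 2) ^ 2 = (1 + Real.cos α) / 2 := by
      have h0 := Real.cos_sq (α / 2)
      rw [show 2 * (α / 2) = α by ring] at h0
      rw [h0]; ring
    have hhalfs : Real.sin (α / 2) ^ 2 = (1 - Real.cos α) / 2 := by
      have h0 := Real.sin_sq (α / 2)
      rw [h0, hhalfc]; ring
    rw [hsinθ, hsinφ, hcosθ, hcosφ]
    have expand : (2 * a * b * Real.cos (α/2) * Real.cos (α/2)) ^ 2
        + (b * (Real.cos (α/2) * Real.sin (α/2) - -Real.sin (α/2) * Real.cos (α/2))) ^ 2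
        = 4 * a^2 * b^2 * (Real.cos (α/2)^2)^2
          + 4 * b^2 * (Real.sin (α/2)^2) * (Real.cos (α/2)^2) := by ring
    rw [expand, hhalfc, hhalfs, hcos]
    rw [ha, hb]
    simp only [div_pow, hΩsq]
    field_simp
    ring
  · rw [ht₁, ht₂]
    field_simp
    ring
end

section
/- For square matrices A depending smoothly on a parameter θ, the Wilcox formula holds: d/dθ exp(tA) = exp(tA) · ∫₀ᵗ exp(-t'A) (dA/dθ) exp(t'A) dt'. -/
open Matrix

attribute [local instance] Matrix.linftyOpNormedAddCommGroup Matrix.linftyOpNormedRing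
  Matrix.linftyOpNormedAlgebra

open NormedSpace MeasureTheory Filter Topology

variable {n : ℕ}

theorem my_norm_one_le : ‖(1 : Matrix (Fin n) (Fin n) ℂ)‖ ≤ 1 := by
  rcases Nat.eq_zero_or_pos n with h | h
  · subst h
    have : (1 : Matrix (Fin 0) (Fin 0) ℂ) = 0 := Subsingleton.elim _ _
    simp [this]
  · have : Nonempty (Fin n) := ⟨⟨0, h⟩⟩
    simp

theorem my_norm_exp_le (x : Matrix (Fin n) (Fin n) ℂ) :
    ‖NormedSpace.exp x‖ ≤ Real.exp ‖x‖ := by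
  rw [Real.exp_eq_exp_ℝ, NormedSpace.exp_eq_tsum (𝕂 := ℂ), NormedSpace.exp_eq_tsum (𝕂 := ℝ)]
  have hsum : Summable fun k : ℕ =>
      ‖((Nat.factorial k : ℂ)⁻¹ • x ^ k : Matrix (Fin n) (Fin n) ℂ)‖ := by
    have := NormedSpace.norm_expSeries_summable (𝕂 := ℂ) x
    simpa [NormedSpace.expSeries_apply_eq] using this
  have hsum' : Summable fun k : ℕ => (Nat.factorial k : ℝ)⁻¹ • ‖x‖ ^ k := by
    simpa [smul_eq_mul, div_eq_inv_mul] using Real.summable_pow_div_factorial ‖x‖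
  refine (norm_tsum_le_tsum_norm hsum).trans ?_
  refine Summable.tsum_le_tsum (fun k => ?_) hsum hsum'
  rw [norm_smul, smul_eq_mul]
  gcongr
  · simp
  · rcases Nat.eq_zero_or_pos k with hk | hk
    · subst hk; rw [pow_zero, pow_zero]; exact my_norm_one_le
    · exact norm_pow_le' x hk

theorem my_exp_deriv (X : Matrix (Fin n) (Fin n) ℂ) (s : ℝ) :
    HasDerivAt (fun u : ℝ => NormedSpace.exp (u • X)) (NormedSpace.exp (s • X) * X) s := by
  have := hasDerivAt_exp_smul_const (𝕂 := ℝ) (𝔸 := Matrix (Fin n) (Fin n) ℂ) X s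
  exact this

theorem my_exp_comm (X : Matrix (Fin n) (Fin n) ℂ) (s : ℝ) :
    NormedSpace.exp (s • X) * X = X * NormedSpace.exp (s • X) :=
  (((Commute.refl X).smul_left s).exp_left)

theorem my_duhamel (X Y : Matrix (Fin n) (Fin n) ℂ) (t : ℝ) :
    NormedSpace.exp (t • X) - NormedSpace.exp (t • Y) =
      ∫ s in (0:ℝ)..t,
        NormedSpace.exp ((t - s) • Y) * (X - Y) * NormedSpace.exp (s • X) := by
  have key : ∀ s : ℝ, HasDerivAt
      (fun s : ℝ => NormedSpace.exp ((t - s) • Y) * NormedSpace.exp (s • X))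
      (NormedSpace.exp ((t - s) • Y) * (X - Y) * NormedSpace.exp (s • X)) s := by
    intro s
    have h1 : HasDerivAt (fun s : ℝ => NormedSpace.exp ((t - s) • Y))
        ((-1 : ℝ) • (NormedSpace.exp ((t - s) • Y) * Y)) s := by
      have hout := my_exp_deriv Y (t - s)
      have hin : HasDerivAt (fun s : ℝ => t - s) (-1) s := by
        exact (hasDerivAt_id s).const_sub t
      exact hout.scomp s hin
    have h2 := my_exp_deriv X s
    have := h1.mul h2
    refine this.congr_deriv ?_
    rw [my_exp_comm X s]
    simp only [neg_one_smul, smul_eq_mul]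
    noncomm_ring
  have hcont : Continuous fun s : ℝ =>
      NormedSpace.exp ((t - s) • Y) * (X - Y) * NormedSpace.exp (s • X) := by
    exact ((NormedSpace.exp_continuous.comp ((continuous_const.sub continuous_id).smul
      continuous_const)).mul continuous_const).mul
      (NormedSpace.exp_continuous.comp (continuous_id.smul continuous_const))
  have := intervalIntegral.integral_eq_sub_of_hasDerivAt (f := fun s : ℝ =>
      NormedSpace.exp ((t - s) • Y) * NormedSpace.exp (s • X))
      (fun s _ => key s) (hcont.intervalIntegrable 0 t)
  rw [this]
  simp [NormedSpace.exp_zero]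

theorem my_uIoc_abs {s t : ℝ} (hs : s ∈ Set.uIoc 0 t) : |t - s| ≤ |t| ∧ |s| ≤ |t| := by
  rw [Set.mem_uIoc] at hs
  rcases hs with ⟨h1, h2⟩ | ⟨h1, h2⟩ <;>
    constructor <;> rw [abs_le] <;>
    constructor <;> cases abs_cases t <;> linarith [le_abs_self t, neg_abs_le t]

theorem my_exp_split (X : Matrix (Fin n) (Fin n) ℂ) (t s : ℝ) :
    NormedSpace.exp (t • X) * NormedSpace.exp ((-s) • X)
      = NormedSpace.exp ((t - s) • X) := by
  refine (NormedSpace.exp_add_of_commute (((Commute.refl X).smul_left t).smul_right (-s))).symm.trans ?_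
  rw [← add_smul]
  norm_num [sub_eq_add_neg]
  rfl

set_option maxHeartbeats 1000000 in
/-- Wilcox formula: for a matrix A depending differentiably on a parameter θ,
d/dθ exp(tA) = exp(tA) · ∫₀ᵗ exp(-t'A) (dA/dθ) exp(t'A) dt'. -/
theorem wilcox_formula
    {n : ℕ}
    (A : ℝ → Matrix (Fin n) (Fin n) ℂ) (θ₀ : ℝ)
    (A' : Matrix (Fin n) (Fin n) ℂ) (hA : HasDerivAt A A' θ₀) (t : ℝ) :
    HasDerivAt (fun θ => NormedSpace.exp (t • A θ))
      (NormedSpace.exp (t • A θ₀) *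
        ∫ t' in (0:ℝ)..t,
          NormedSpace.exp ((-t') • A θ₀) * A' * NormedSpace.exp (t' • A θ₀))
      θ₀ := by
  have hAcont : Tendsto A (𝓝[≠] θ₀) (𝓝 (A θ₀)) :=
    hA.continuousAt.tendsto.mono_left nhdsWithin_le_nhds
  have hslope : Tendsto (slope A θ₀) (𝓝[≠] θ₀) (𝓝 A') :=
    hasDerivAt_iff_tendsto_slope.mp hA
  -- continuity of integrands
  have cont1 : Continuous fun s : ℝ =>
      NormedSpace.exp ((-s) • A θ₀) * A' * NormedSpace.exp (s • A θ₀) :=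
    ((NormedSpace.exp_continuous.comp (continuous_id.neg.smul continuous_const)).mul
      continuous_const).mul
      (NormedSpace.exp_continuous.comp (continuous_id.smul continuous_const))
  have cont2 : ∀ B C : Matrix (Fin n) (Fin n) ℂ, Continuous fun s : ℝ =>
      NormedSpace.exp ((t - s) • A θ₀) * C * NormedSpace.exp (s • B) := fun B C =>
    ((NormedSpace.exp_continuous.comp ((continuous_const.sub continuous_id).smul
      continuous_const)).mul continuous_const).mul
      (NormedSpace.exp_continuous.comp (continuous_id.smul continuous_const))
  have htarget :
      NormedSpace.exp (t • A θ₀) *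
        ∫ s in (0:ℝ)..t,
          NormedSpace.exp ((-s) • A θ₀) * A' * NormedSpace.exp (s • A θ₀)
      = ∫ s in (0:ℝ)..t,
          NormedSpace.exp ((t - s) • A θ₀) * A' * NormedSpace.exp (s • A θ₀) := by
    have hi : IntervalIntegrable _ volume (0:ℝ) t := cont1.intervalIntegrable 0 t
    rw [show NormedSpace.exp (t • A θ₀) *
        ∫ s in (0:ℝ)..t,
          NormedSpace.exp ((-s) • A θ₀) * A' * NormedSpace.exp (s • A θ₀)
      = ContinuousLinearMap.mul ℂ _ (NormedSpace.exp (t • A θ₀))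
          (∫ s in (0:ℝ)..t,
            NormedSpace.exp ((-s) • A θ₀) * A' * NormedSpace.exp (s • A θ₀)) from rfl,
      ← (ContinuousLinearMap.mul ℂ _
        (NormedSpace.exp (t • A θ₀))).intervalIntegral_comp_comm hi]
    refine intervalIntegral.integral_congr fun s _ => ?_
    simp only [ContinuousLinearMap.mul_apply', ← mul_assoc, my_exp_split]
  rw [htarget]; refine hasDerivAt_iff_tendsto_slope.mpr ?_
  have key : Tendsto (fun θ => ∫ s in (0:ℝ)..t,
      NormedSpace.exp ((t - s) • A θ₀) * slope A θ₀ θ * NormedSpace.exp (s • A θ))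
      (𝓝[≠] θ₀)
      (𝓝 (∫ s in (0:ℝ)..t,
        NormedSpace.exp ((t - s) • A θ₀) * A' * NormedSpace.exp (s • A θ₀))) := by
    apply intervalIntegral.tendsto_integral_filter_of_dominated_convergence
      (bound := fun _ => Real.exp (|t| * ‖A θ₀‖) *
        ((‖A'‖ + 1) * Real.exp (|t| * (‖A θ₀‖ + 1))))
    · haveI : TopologicalSpace.PseudoMetrizableSpace (Matrix (Fin n) (Fin n) ℂ) :=
        inferInstanceAs (TopologicalSpace.PseudoMetrizableSpace (Fin n → Fin n → ℂ))
      exact Eventually.of_forall fun θ => (cont2 (A θ) (slope A θ₀ θ)).aestronglyMeasurable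
    · have h1 : ∀ᶠ θ in 𝓝[≠] θ₀, ‖A θ‖ ≤ ‖A θ₀‖ + 1 := by
        filter_upwards [Metric.tendsto_nhds.mp hAcont 1 one_pos] with θ hθ
        rw [dist_eq_norm] at hθ
        have h := norm_sub_norm_le (A θ) (A θ₀)
        linarith
      have h2 : ∀ᶠ θ in 𝓝[≠] θ₀, ‖slope A θ₀ θ‖ ≤ ‖A'‖ + 1 := by
        filter_upwards [Metric.tendsto_nhds.mp hslope 1 one_pos] with θ hθ
        rw [dist_eq_norm] at hθ
        have h := norm_sub_norm_le (slope A θ₀ θ) A'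
        linarith
      filter_upwards [h1, h2] with θ hθ1 hθ2
      refine ae_of_all _ fun s hs => ?_
      obtain ⟨hts, hst⟩ := my_uIoc_abs hs
      have e1 : ‖NormedSpace.exp ((t - s) • A θ₀)‖ ≤ Real.exp (|t| * ‖A θ₀‖) := by
        refine (my_norm_exp_le _).trans ?_
        rw [norm_smul, Real.norm_eq_abs]
        gcongr
      have e2 : ‖NormedSpace.exp (s • A θ)‖ ≤ Real.exp (|t| * (‖A θ₀‖ + 1)) := by
        refine (my_norm_exp_le _).trans ?_
        rw [norm_smul, Real.norm_eq_abs]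
        exact Real.exp_le_exp.mpr (mul_le_mul hst hθ1 (norm_nonneg _) (abs_nonneg t))
      calc ‖NormedSpace.exp ((t - s) • A θ₀) * slope A θ₀ θ *
            NormedSpace.exp (s • A θ)‖
          ≤ ‖NormedSpace.exp ((t - s) • A θ₀)‖ * ‖slope A θ₀ θ‖ *
            ‖NormedSpace.exp (s • A θ)‖ :=
            (norm_mul_le _ _).trans (by gcongr; exact norm_mul_le _ _)
        _ ≤ Real.exp (|t| * ‖A θ₀‖) * ((‖A'‖ + 1) * Real.exp (|t| * (‖A θ₀‖ + 1))) := by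
            rw [← mul_assoc]
            gcongr
    · exact intervalIntegrable_const
    · refine ae_of_all _ fun s hs => ?_
      have e2 : Tendsto (fun θ => NormedSpace.exp (s • A θ)) (𝓝[≠] θ₀)
          (𝓝 (NormedSpace.exp (s • A θ₀))) :=
        Tendsto.comp ((NormedSpace.exp_continuous
          (𝔸 := Matrix (Fin n) (Fin n) ℂ)).tendsto (s • A θ₀))
          (hAcont.const_smul s)
      exact (tendsto_const_nhds.mul hslope).mul e2
  refine key.congr fun θ => ?_
  rw [slope_def_module (fun θ => NormedSpace.exp (t • A θ)) θ₀ θ,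
    my_duhamel (A θ) (A θ₀) t, ← intervalIntegral.integral_smul]
  refine intervalIntegral.integral_congr fun s _ => ?_
  rw [slope_def_module]
  simp only [Algebra.mul_smul_comm, Algebra.smul_mul_assoc]
end

section
/- Let H(u) be an n×n matrix depending differentiably on a real parameter u, and let H̃(u) be the 2n×2n block matrix with H on both diagonal blocks, ∂H/∂u in the lower-left block, and 0 in the upper-right block. Then for any scalar α, exp(αH̃) is the block matrix with exp(αH) on both diagonal blocks, ∂/∂u[exp(αH)] in the lower-left block, and 0 in the upper-right block. -/
open Matrix

attribute [local instance] Matrix.linftyOpNormedAddCommGroup Matrix.linftyOpNormedRing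
  Matrix.linftyOpNormedAlgebra

open NormedSpace Finset Nat

namespace ExpBlockAux

noncomputable section

variable {𝔸 : Type*} [NormedRing 𝔸] [NormedAlgebra ℂ 𝔸] [CompleteSpace 𝔸]

/-- The `k`-th term of the derivative series of `exp`: the Fréchet derivative of `y ↦ y ^ k`. -/
noncomputable def expD (k : ℕ) (x : 𝔸) : 𝔸 →L[ℂ] 𝔸 :=
  ∑ i ∈ Finset.range k, ContinuousLinearMap.mulLeftRight ℂ 𝔸 (x ^ i) (x ^ (k - 1 - i))

lemma expD_apply (k : ℕ) (x b : 𝔸) :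
    expD k x b = ∑ i ∈ Finset.range k, x ^ i * b * x ^ (k - 1 - i) := by
  simp [expD, ContinuousLinearMap.mulLeftRight_apply]

lemma expD_zero (x : 𝔸) : expD 0 x = 0 := by
  simp [expD]

lemma expD_succ_apply (k : ℕ) (x b : 𝔸) :
    expD (k + 1) x b = x ^ k * b + expD k x b * x := by
  rw [expD_apply, expD_apply]
  have h2 : ∀ i ∈ Finset.range (k + 1), x ^ i * b * x ^ (k + 1 - 1 - i) = x ^ i * b * x ^ (k - i) :=
    fun i _ => by norm_num
  rw [Finset.sum_congr rfl h2, Finset.sum_range_succ, Finset.sum_mul]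
  have h1 : ∀ i ∈ Finset.range k, (x ^ i * b * x ^ (k - 1 - i)) * x = x ^ i * b * x ^ (k - i) := by
    intro i hi
    rw [Finset.mem_range] at hi
    rw [mul_assoc, ← pow_succ]
    congr 2
    omega
  rw [Finset.sum_congr rfl h1]
  simp [add_comm]

lemma hasFDerivAt_pow' (k : ℕ) (x : 𝔸) :
    HasFDerivAt (fun y : 𝔸 => y ^ k) (expD k x) x := by
  induction k with
  | zero =>
      rw [expD_zero]
      have : (fun y : 𝔸 => y ^ 0) = fun _ : 𝔸 => (1 : 𝔸) := funext fun y => pow_zero y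
      rw [this]
      exact hasFDerivAt_const (1 : 𝔸) x
  | succ k ih =>
      have h : HasFDerivAt (fun y : 𝔸 => y ^ k * y)
          (x ^ k • (ContinuousLinearMap.id ℂ 𝔸)
            + (expD k x).smulRight x) x := ih.mul' (hasFDerivAt_id x)
      have h2 : (fun y : 𝔸 => y ^ (k + 1)) = fun y : 𝔸 => y ^ k * y :=
        funext fun y => pow_succ y k
      rw [h2]
      convert h using 1
      ext b
      simp [expD_succ_apply, smul_eq_mul]

lemma norm_pow_le_aux (x : 𝔸) {C : ℝ} (hx : ‖x‖ ≤ C) (i : ℕ) :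
    ‖x ^ i‖ ≤ max 1 ‖(1 : 𝔸)‖ * C ^ i := by
  cases i with
  | zero => simpa using le_max_right 1 ‖(1 : 𝔸)‖
  | succ i =>
      have hC : 0 ≤ C := le_trans (norm_nonneg x) hx
      calc ‖x ^ (i + 1)‖ ≤ ‖x‖ ^ (i + 1) := norm_pow_le' x (Nat.succ_pos i)
        _ ≤ C ^ (i + 1) := pow_le_pow_left₀ (norm_nonneg x) hx _
        _ ≤ max 1 ‖(1 : 𝔸)‖ * C ^ (i + 1) :=
            le_mul_of_one_le_left (by positivity) (le_max_left _ _)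

lemma norm_expD_le (k : ℕ) {x : 𝔸} {C : ℝ} (hx : ‖x‖ ≤ C) :
    ‖expD k x‖ ≤ k * ((max 1 ‖(1 : 𝔸)‖) ^ 2 * C ^ (k - 1)) := by
  set M := max 1 ‖(1 : 𝔸)‖ with hM
  have hC : 0 ≤ C := le_trans (norm_nonneg x) hx
  calc ‖expD k x‖ ≤ ∑ i ∈ Finset.range k,
        ‖ContinuousLinearMap.mulLeftRight ℂ 𝔸 (x ^ i) (x ^ (k - 1 - i))‖ :=
      norm_sum_le _ _
    _ ≤ ∑ i ∈ Finset.range k, M ^ 2 * C ^ (k - 1) := by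
        refine Finset.sum_le_sum fun i hi => ?_
        rw [Finset.mem_range] at hi
        calc ‖ContinuousLinearMap.mulLeftRight ℂ 𝔸 (x ^ i) (x ^ (k - 1 - i))‖
            ≤ ‖x ^ i‖ * ‖x ^ (k - 1 - i)‖ :=
              ContinuousLinearMap.opNorm_mulLeftRight_apply_apply_le ℂ 𝔸 _ _
          _ ≤ (M * C ^ i) * (M * C ^ (k - 1 - i)) := by
              refine mul_le_mul (norm_pow_le_aux x hx i) (norm_pow_le_aux x hx _)
                (norm_nonneg _) (by positivity)
          _ = M ^ 2 * (C ^ i * C ^ (k - 1 - i)) := by ring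
          _ = M ^ 2 * C ^ (k - 1) := by
              rw [← pow_add]
              congr 2
              omega
    _ = k * (M ^ 2 * C ^ (k - 1)) := by
        rw [Finset.sum_const, Finset.card_range, nsmul_eq_mul]

/-- The summable bound used for the derivative series of `exp`. -/
noncomputable def expU (A : 𝔸) (k : ℕ) : ℝ :=
  (k * ((max 1 ‖(1 : 𝔸)‖) ^ 2 * (‖A‖ + 1) ^ (k - 1))) / k !

lemma summable_expU (A : 𝔸) : Summable (expU A) := by
  set M := max 1 ‖(1 : 𝔸)‖ with hM
  set C := ‖A‖ + 1 with hC
  refine (summable_nat_add_iff 1).1 ?_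
  have h := (Real.summable_pow_div_factorial C).mul_left (M ^ 2)
  refine h.congr fun k => ?_
  have hfac : ((k + 1)! : ℝ) = (k + 1) * (k ! : ℝ) := by
    push_cast [Nat.factorial_succ]; ring
  have hk : ((k : ℝ) + 1) ≠ 0 := by positivity
  have hkf : (k ! : ℝ) ≠ 0 := by positivity
  rw [expU, show (k + 1 - 1 : ℕ) = k from rfl]
  push_cast
  rw [hfac]
  field_simp
  ring

lemma norm_smul_expD_le (A : 𝔸) {x : 𝔸} (hx : ‖x‖ ≤ ‖A‖ + 1) (k : ℕ) :
    ‖(k !⁻¹ : ℂ) • expD k x‖ ≤ expU A k := by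
  rw [norm_smul ((k !⁻¹ : ℂ)) (expD k x), norm_inv]
  have h1 : ‖((k ! : ℕ) : ℂ)‖ = (k ! : ℝ) := by
    rw [Complex.norm_natCast]
  rw [h1]
  rw [expU, div_eq_inv_mul]
  exact mul_le_mul_of_nonneg_left (norm_expD_le k hx) (by positivity)

lemma norm_le_of_mem_ball {A x : 𝔸} (hx : x ∈ Metric.ball A 1) : ‖x‖ ≤ ‖A‖ + 1 := by
  rw [Metric.mem_ball, dist_eq_norm] at hx
  calc ‖x‖ = ‖A + (x - A)‖ := by rw [add_sub_cancel]
    _ ≤ ‖A‖ + ‖x - A‖ := norm_add_le _ _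
    _ ≤ ‖A‖ + 1 := by linarith

/-- The exponential on a complex Banach algebra is Fréchet differentiable everywhere,
with derivative given by the term-by-term derivative of the exponential series. -/
theorem exp_hasFDerivAt (A : 𝔸) :
    HasFDerivAt (NormedSpace.exp) (∑' k : ℕ, (k !⁻¹ : ℂ) • expD k A) A := by
  have key := hasFDerivAt_tsum_of_isPreconnected (summable_expU A) Metric.isOpen_ball
    (convex_ball A 1).isPreconnected
    (f := fun (k : ℕ) (y : 𝔸) => (k !⁻¹ : ℂ) • y ^ k)
    (f' := fun (k : ℕ) (x : 𝔸) => (k !⁻¹ : ℂ) • expD k x)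
    (fun k x _ => (hasFDerivAt_pow' k x).const_smul ((k !⁻¹ : ℂ)))
    (fun k x hx => norm_smul_expD_le A (norm_le_of_mem_ball hx) k)
    (Metric.mem_ball_self one_pos)
    (expSeries_summable' A)
    (Metric.mem_ball_self one_pos)
  rw [NormedSpace.exp_eq_tsum (𝕂 := ℂ)]
  exact key

theorem summable_expD_smul (A : 𝔸) : Summable (fun k : ℕ => (k !⁻¹ : ℂ) • expD k A) :=
  Summable.of_norm_bounded (summable_expU A)
    (norm_smul_expD_le A (by linarith [norm_nonneg A]))

theorem exp_fderiv_apply (A B : 𝔸) :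
    (∑' k : ℕ, (k !⁻¹ : ℂ) • expD k A) B = ∑' k : ℕ, (k !⁻¹ : ℂ) • expD k A B := by
  have h := (ContinuousLinearMap.apply ℂ 𝔸 B).map_tsum (summable_expD_smul A)
  simpa using h

theorem summable_expD_smul_apply (A B : 𝔸) :
    Summable (fun k : ℕ => (k !⁻¹ : ℂ) • expD k A B) := by
  have h := (summable_expD_smul A).map
    (ContinuousLinearMap.apply ℂ 𝔸 B).toLinearMap.toAddMonoidHom
    (ContinuousLinearMap.apply ℂ 𝔸 B).continuous
  simpa [Function.comp_def] using h

end

section MatrixBlocks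

variable {n : ℕ}

lemma fromBlocks_pow (A B : Matrix (Fin n) (Fin n) ℂ) (k : ℕ) :
    (fromBlocks A 0 B A) ^ k = fromBlocks (A ^ k) 0 (expD k A B) (A ^ k) := by
  induction k with
  | zero => simp [pow_zero, expD_zero]
  | succ k ih =>
      rw [pow_succ, ih, pow_succ, fromBlocks_multiply]
      simp [expD_succ_apply, add_comm]

lemma exp_fromBlocks (A B : Matrix (Fin n) (Fin n) ℂ) :
    NormedSpace.exp (fromBlocks A 0 B A) =
      fromBlocks (NormedSpace.exp A) 0
        (∑' k : ℕ, (k !⁻¹ : ℂ) • expD k A B) (NormedSpace.exp A) := by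
  have h1 : HasSum (fun k : ℕ => (k !⁻¹ : ℂ) • A ^ k) (NormedSpace.exp A) :=
    NormedSpace.exp_series_hasSum_exp' A
  have h2 : HasSum (fun k : ℕ => (k !⁻¹ : ℂ) • expD k A B)
      (∑' k : ℕ, (k !⁻¹ : ℂ) • expD k A B) := (summable_expD_smul_apply A B).hasSum
  let L : (Matrix (Fin n) (Fin n) ℂ × Matrix (Fin n) (Fin n) ℂ) →ₗ[ℂ]
      Matrix (Fin n ⊕ Fin n) (Fin n ⊕ Fin n) ℂ :=
    { toFun := fun p => fromBlocks p.1 0 p.2 p.1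
      map_add' := fun p q => by
        simp [Matrix.fromBlocks_add]
      map_smul' := fun c p => by
        simp [Matrix.fromBlocks_smul] }
  have hL : Continuous L := L.continuous_of_finiteDimensional
  have h3 := (h1.prodMk h2).map L.toAddMonoidHom hL
  have hf : (fun k : ℕ => L ((k !⁻¹ : ℂ) • A ^ k, (k !⁻¹ : ℂ) • expD k A B))
      = fun k : ℕ => (k !⁻¹ : ℂ) • (fromBlocks A 0 B A) ^ k := by
    funext k
    show fromBlocks ((k !⁻¹ : ℂ) • A ^ k) 0 ((k !⁻¹ : ℂ) • expD k A B) ((k !⁻¹ : ℂ) • A ^ k)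
      = (k !⁻¹ : ℂ) • (fromBlocks A 0 B A) ^ k
    rw [fromBlocks_pow, Matrix.fromBlocks_smul, smul_zero]
  have h4 : HasSum (fun k : ℕ => (k !⁻¹ : ℂ) • (fromBlocks A 0 B A) ^ k)
      (fromBlocks (NormedSpace.exp A) 0
        (∑' k : ℕ, (k !⁻¹ : ℂ) • expD k A B) (NormedSpace.exp A)) := by
    rw [← hf]
    exact h3
  rw [NormedSpace.exp_eq_tsum (𝕂 := ℂ)]
  exact h4.tsum_eq

end MatrixBlocks

end ExpBlockAux

open ExpBlockAux

/-- Auxiliary-matrix trick: if H̃(u) = [[H(u), 0], [∂H/∂u(u), H(u)]], then for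
any scalar α, exp(αH̃) = [[exp(αH), 0], [∂/∂u exp(αH), exp(αH)]]. -/
theorem exp_block_matrix_gradient
    {n : ℕ}
    (H : ℝ → Matrix (Fin n) (Fin n) ℂ) (hH : Differentiable ℝ H)
    (α : ℂ) (u : ℝ) :
    NormedSpace.exp
        (α • Matrix.fromBlocks (H u) 0 (deriv H u) (H u)) =
      Matrix.fromBlocks (NormedSpace.exp (α • H u)) 0
        (deriv (fun v => NormedSpace.exp (α • H v)) u)
        (NormedSpace.exp (α • H u)) := by
  have hd : HasDerivAt (fun v => α • H v) (α • deriv H u) u :=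
    ((hH u).hasDerivAt).const_smul α
  have he := exp_hasFDerivAt (α • H u)
  have hc : HasDerivAt (fun v => NormedSpace.exp (α • H v))
      ((∑' k : ℕ, (k !⁻¹ : ℂ) • expD k (α • H u)) (α • deriv H u)) u := by
    have h := (he.restrictScalars ℝ).comp_hasDerivAt u hd
    exact h
  erw [hc.deriv]
  have hsm : α • Matrix.fromBlocks (H u) 0 (deriv H u) (H u)
      = Matrix.fromBlocks (α • H u) 0 (α • deriv H u) (α • H u) := by
    rw [Matrix.fromBlocks_smul, smul_zero]
  rw [hsm, exp_fromBlocks, exp_fderiv_apply]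
  rfl
end
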